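/- Let u be a 1-periodic C² function on ℝ³ with ∫_{[0,1]³} u dV = 0 solving the reduced Calabi–Yau equation (u_xx + 1)(u_yy + u_tt + u_t + 1) − u_xy² − u_xt² = e^F for a continuous 1-periodic F : ℝ³ → ℝ. Then at every point of ℝ³ one has u_xx > −1 and u_yy + u_tt + u_t > −1. -/

import Mathlib

open MeasureTheory

noncomputable section

/-- Points of `ℝ³`, written as `ℝ × ℝ × ℝ`. -/
abbrev R3 := ℝ × ℝ × ℝ

/-- The coordinate direction `x`. -/
def vx : R3 := (1, 0, 0)
/-- The coordinate direction `y`. -/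
def vy : R3 := (0, 1, 0)
/-- The coordinate direction `t`. -/
def vt : R3 := (0, 0, 1)

/-- Partial (directional) derivative in the direction `e`. -/
def pd (e : R3) (u : R3 → ℝ) : R3 → ℝ := fun p => fderiv ℝ u p e

/-- `1`-periodicity in each of the three variables. -/
def Periodic3 (u : R3 → ℝ) : Prop :=
  ∀ p : R3, u (p + vx) = u p ∧ u (p + vy) = u p ∧ u (p + vt) = u p

/-- The unit cube `[0,1]³`. -/
def cube : Set R3 := Set.Icc (0, 0, 0) (1, 1, 1)

/-- Zero mean over the unit cube. -/
def ZeroMean (u : R3 → ℝ) : Prop := ∫ p in cube, u p = 0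

/-- The reduced Calabi–Yau equation
`(u_xx + 1)(u_yy + u_tt + u_t + 1) − u_xy² − u_xt² = e^F` on `ℝ³`. -/
def CYeq (F u : R3 → ℝ) : Prop :=
  ∀ p : R3,
    (pd vx (pd vx u) p + 1)
        * (pd vy (pd vy u) p + pd vt (pd vt u) p + pd vt u p + 1)
      - (pd vy (pd vx u) p) ^ 2 - (pd vt (pd vx u) p) ^ 2 = Real.exp (F p)

/-- The Euclidean norm on `ℝ³ = ℝ × ℝ × ℝ`. -/
def enorm3 (h : R3) : ℝ := Real.sqrt (h.1 ^ 2 + h.2.1 ^ 2 + h.2.2 ^ 2)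

/-- Periodicity of the differential of a periodic differentiable function. -/
lemma fderiv_periodic_aux (u : R3 → ℝ) (hud : Differentiable ℝ u) (v : R3)
    (h : ∀ p, u (p + v) = u p) (p : R3) : fderiv ℝ u (p + v) = fderiv ℝ u p := by
  have h1 : HasFDerivAt u (fderiv ℝ u (p + v)) (p + v) := (hud (p + v)).hasFDerivAt
  have h2 : HasFDerivAt (fun x => u (x + v)) (fderiv ℝ u (p + v)) p := by
    simpa [Function.comp_def] using h1.comp p ((hasFDerivAt_id p).add_const v)
  have : (fun x => u (x + v)) = u := funext h
  rw [this] at h2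
  exact h2.fderiv.symm

/-- The restriction of a differentiable function to a horizontal line, with its derivative. -/
lemma hasDerivAt_line_aux (w : R3 → ℝ) (hw : Differentiable ℝ w) (x : ℝ) :
    HasDerivAt (fun s : ℝ => w (s, 0, 0)) (pd vx w (x, 0, 0)) x := by
  have hL : HasFDerivAt (fun s : ℝ => ((s, 0, 0) : R3))
      (ContinuousLinearMap.inl ℝ ℝ (ℝ × ℝ)) x := (ContinuousLinearMap.inl ℝ ℝ (ℝ × ℝ)).hasFDerivAt
  have h2 := ((hw (x, 0, 0)).hasFDerivAt.comp x hL).hasDerivAt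
  simpa [pd, vx, Function.comp_def, Prod.mk_zero_zero] using h2

/-- For a `C²` `1`-periodic zero-mean solution `u` of the reduced
Calabi–Yau equation with continuous `1`-periodic datum `F`, one has `u_xx > -1`
and `u_yy + u_tt + u_t > -1` everywhere. -/
theorem stmt0 (F u : R3 → ℝ) (hF : Continuous F) (hFper : Periodic3 F)
    (hu : ContDiff ℝ 2 u) (huper : Periodic3 u) (humean : ZeroMean u)
    (hsol : CYeq F u) :
    ∀ p : R3, -1 < pd vx (pd vx u) p ∧ -1 < pd vy (pd vy u) p + pd vt (pd vt u) p + pd vt u p := by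
  -- abbreviations
  set A : R3 → ℝ := fun p => pd vx (pd vx u) p + 1 with hA
  set B : R3 → ℝ := fun p =>
    pd vy (pd vy u) p + pd vt (pd vt u) p + pd vt u p + 1 with hB
  -- the product is positive everywhere
  have hAB : ∀ p, 0 < A p * B p := by
    intro p
    have := hsol p
    have hexp := Real.exp_pos (F p)
    simp only [hA, hB]
    nlinarith [sq_nonneg (pd vy (pd vx u) p), sq_nonneg (pd vt (pd vx u) p)]
  have hAne : ∀ p, A p ≠ 0 := by
    intro p hp
    have := hAB p
    rw [hp, zero_mul] at this
    exact lt_irrefl 0 this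
  -- regularity
  have h1 : ContDiff ℝ 1 (pd vx u) := by
    unfold pd
    exact (hu.fderiv_right (by norm_num)).clm_apply contDiff_const
  have hAcont : Continuous A := by
    have : Continuous (pd vx (pd vx u)) := by
      unfold pd
      exact ((h1.fderiv_right (m := 0) (by norm_num)).clm_apply contDiff_const).continuous
    exact this.add continuous_const
  -- periodicity of `pd vx u` in the `x`-direction
  have hud : Differentiable ℝ u := hu.differentiable (by norm_num)
  have hper1 : ∀ p : R3, pd vx u (p + vx) = pd vx u p := by
    intro p
    have := fderiv_periodic_aux u hud vx (fun q => (huper q).1) p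
    simp only [pd, this]
  -- there is a point where `A` is positive
  have hex : ∃ q : R3, 0 < A q := by
    by_contra hcon
    push_neg at hcon
    have hneg : ∀ q : R3, A q < 0 := fun q => lt_of_le_of_ne (hcon q) (hAne q)
    -- the function g s = u_x (s,0,0) would be strictly decreasing yet periodic
    have hwd : Differentiable ℝ (pd vx u) := h1.differentiable one_ne_zero
    have hg : ∀ x : ℝ, HasDerivAt (fun s : ℝ => pd vx u (s, 0, 0))
        (pd vx (pd vx u) (x, 0, 0)) x := fun x => hasDerivAt_line_aux (pd vx u) hwd x
    have hg' : ∀ x : ℝ, pd vx (pd vx u) (x, 0, 0) < 0 := by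
      intro x
      have := hneg (x, 0, 0)
      simp only [hA] at this
      linarith
    have hanti : StrictAnti (fun s : ℝ => pd vx u (s, 0, 0)) :=
      strictAnti_of_hasDerivAt_neg hg hg'
    have h01 : (0 : ℝ) < 1 := one_pos
    have hlt := hanti h01
    have heq : pd vx u (1, 0, 0) = pd vx u (0, 0, 0) := by
      have := hper1 (0, 0, 0)
      have hvx : ((0, 0, 0) : R3) + vx = (1, 0, 0) := by
        simp [vx, Prod.ext_iff]
      rw [hvx] at this
      exact this
    simp only [heq] at hlt
    exact lt_irrefl _ hlt
  obtain ⟨q, hq⟩ := hex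
  -- `A` is positive everywhere by the intermediate value theorem
  have hApos : ∀ p : R3, 0 < A p := by
    intro p
    rcases lt_or_gt_of_ne (hAne p) with hlt | hgt
    · exfalso
      have h0 : (0 : ℝ) ∈ Set.Icc (A p) (A q) := ⟨le_of_lt hlt, le_of_lt hq⟩
      have := intermediate_value_univ p q hAcont h0
      obtain ⟨r, hr⟩ := this
      exact hAne r hr
    · exact hgt
  intro p
  have hA' := hApos p
  have hB' : 0 < B p := by
    have hab := hAB p
    by_contra hb
    push_neg at hb
    nlinarith
  constructor
  · simp only [hA] at hA'; linarith
  · simp only [hB] at hB'; linarith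

end
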